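/- Let d ≥ 3 and let Δ = conv{v_0, …, v_d} be a simplex with all vertices on S^{d-1} such that for each i the spherical centroid G(V_i(Δ)) is well defined (∫_{V_i(Δ)} x dμ(x) ≠ 0) and the points G(V_0(Δ)), …, G(V_d(Δ)) are affinely independent. Let Δ_G = conv{G(V_0(Δ)), …, G(V_d(Δ))}. Then w(Δ) ≤ w(Δ_G). -/

import Mathlib

open MeasureTheory RealInnerProductSpace

/-- The uniform spherical (surface) measure on `ℝ^d`: the `(d-1)`-dimensional
Hausdorff measure, which is rotation invariant. -/
noncomputable def sphMeasure (d : ℕ) : Measure (EuclideanSpace ℝ (Fin d)) :=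
  μH[(d : ℝ) - 1]

/-- Support function of a body `K`. -/
noncomputable def suppFn {d : ℕ} (K : Set (EuclideanSpace ℝ (Fin d)))
    (x : EuclideanSpace ℝ (Fin d)) : ℝ :=
  sSup ((fun y => ⟪x, y⟫) '' K)

/-- Mean width `w(K) = 2 ∫_{S^{d-1}} h_K dμ`. -/
noncomputable def meanWidth {d : ℕ} (K : Set (EuclideanSpace ℝ (Fin d))) : ℝ :=
  2 * ∫ x in Metric.sphere (0 : EuclideanSpace ℝ (Fin d)) 1, suppFn K x ∂(sphMeasure d)

/-- A simplex in `ℝ^d`: the convex hull of `d+1` affinely independent points. -/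
def IsSimplex {d : ℕ} (Δ : Set (EuclideanSpace ℝ (Fin d))) : Prop :=
  ∃ v : Fin (d + 1) → EuclideanSpace ℝ (Fin d),
    AffineIndependent ℝ v ∧ Δ = convexHull ℝ (Set.range v)

/-- The spherical image (Voronoi cell) of the vertex `v i` of the simplex with
vertices `v 0, …, v d`: the points of the sphere where `x ↦ ⟪x, v i⟫` attains the
maximum over all vertices. -/
def vorCell {d : ℕ} (v : Fin (d + 1) → EuclideanSpace ℝ (Fin d)) (i : Fin (d + 1)) :
    Set (EuclideanSpace ℝ (Fin d)) :=
  {x ∈ Metric.sphere (0 : EuclideanSpace ℝ (Fin d)) 1 | ∀ j, ⟪x, v j⟫ ≤ ⟪x, v i⟫}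

/-- Radial projection onto the unit sphere. -/
noncomputable def projSph {d : ℕ} (x : EuclideanSpace ℝ (Fin d)) :
    EuclideanSpace ℝ (Fin d) :=
  ‖x‖⁻¹ • x

/-- The spherical centroid `G(R) = π(∫_R x dμ)`. -/
noncomputable def sphCentroid (d : ℕ) (R : Set (EuclideanSpace ℝ (Fin d))) :
    EuclideanSpace ℝ (Fin d) :=
  projSph (∫ x in R, x ∂(sphMeasure d))

namespace Stmt18Aux

open Metric Finset Module

variable {d : ℕ}

local notation "E" => EuclideanSpace ℝ (Fin d)

lemma cast_ok (hd : 1 ≤ d) {u : E} (hu : u ≠ 0) :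
    ((d : ℝ) - 1) = ((finrank ℝ ((ℝ ∙ u)ᗮ : Submodule ℝ E)) : ℝ) := by
  have h1 : finrank ℝ (ℝ ∙ u) = 1 := finrank_span_singleton hu
  have h2 : finrank ℝ (ℝ ∙ u) + finrank ℝ ((ℝ ∙ u)ᗮ) = finrank ℝ E :=
    Submodule.finrank_add_finrank_orthogonal _
  have h3 : finrank ℝ E = d := finrank_euclideanSpace_fin
  rw [h1, h3] at h2
  have h4 : finrank ℝ ((ℝ ∙ u)ᗮ : Submodule ℝ E) = d - 1 := by omega
  rw [h4, Nat.cast_sub hd, Nat.cast_one]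

lemma hd0 (hd : 1 ≤ d) : (0:ℝ) ≤ (d:ℝ) - 1 := by
  have : (1:ℝ) ≤ (d:ℝ) := by exact_mod_cast hd
  linarith

lemma null_cap (hd : 1 ≤ d) {u : E} (hu : u ≠ 0) :
    sphMeasure d {x : E | x ∈ sphere (0:E) 1 ∧ ⟪u, x⟫ = 0} = 0 := by
  set W := (ℝ ∙ u)ᗮ with hW
  have hiso : Isometry ((↑) : W → E) := W.subtypeₗᵢ.isometry
  have hsub : {x : E | x ∈ sphere (0:E) 1 ∧ ⟪u, x⟫ = 0}
      ⊆ ((↑) : W → E) '' (sphere (0 : W) 1) := by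
    rintro x ⟨hx1, hx2⟩
    have hxW : x ∈ W := Submodule.mem_orthogonal_singleton_iff_inner_right.2 hx2
    refine ⟨⟨x, hxW⟩, ?_, rfl⟩
    have : ‖(⟨x, hxW⟩ : W)‖ = ‖x‖ := rfl
    rw [mem_sphere_zero_iff_norm, this, ← mem_sphere_zero_iff_norm]
    exact hx1
  refine measure_mono_null hsub ?_
  rw [sphMeasure, hiso.hausdorffMeasure_image (Or.inl (hd0 hd)), cast_ok hd hu]
  exact Measure.addHaar_sphere_of_ne_zero _ 0 one_ne_zero

lemma fin_hyp (hd : 1 ≤ d) {u : E} (hu : u ≠ 0) (R : ℝ) :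
    sphMeasure d ({x : E | ⟪u, x⟫ = 0} ∩ closedBall (0:E) R) < ⊤ := by
  set W := (ℝ ∙ u)ᗮ with hW
  have hiso : Isometry ((↑) : W → E) := W.subtypeₗᵢ.isometry
  have himg : {x : E | ⟪u, x⟫ = 0} ∩ closedBall (0:E) R
      = ((↑) : W → E) '' (closedBall (0:W) R) := by
    ext x
    simp only [Set.mem_inter_iff, Set.mem_image, mem_closedBall, dist_zero_right,
      Set.mem_setOf_eq]
    constructor
    · rintro ⟨h1, h2⟩
      exact ⟨⟨x, Submodule.mem_orthogonal_singleton_iff_inner_right.2 h1⟩, h2, rfl⟩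
    · rintro ⟨y, hy, rfl⟩
      exact ⟨Submodule.mem_orthogonal_singleton_iff_inner_right.1 y.2, hy⟩
  rw [sphMeasure, himg, hiso.hausdorffMeasure_image (Or.inl (hd0 hd)), cast_ok hd hu]
  exact (isCompact_closedBall _ _).measure_lt_top

lemma lipschitz_projSph : LipschitzOnWith 2 (projSph (d := d)) {x : E | 1 ≤ ‖x‖} := by
  apply LipschitzOnWith.of_dist_le_mul
  intro x hx y hy
  simp only [Set.mem_setOf_eq] at hx hy
  have hax : (0:ℝ) < ‖x‖ := lt_of_lt_of_le one_pos hx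
  have hay : (0:ℝ) < ‖y‖ := lt_of_lt_of_le one_pos hy
  rw [dist_eq_norm, dist_eq_norm]
  have hdec : projSph x - projSph y = ‖x‖⁻¹ • (x - y) + (‖x‖⁻¹ - ‖y‖⁻¹) • y := by
    simp only [projSph, smul_sub, sub_smul]; abel
  have hinv : ‖x‖⁻¹ ≤ 1 := by
    have h := mul_le_mul_of_nonneg_left hx (le_of_lt (inv_pos.2 hax))
    simpa [inv_mul_cancel₀ (ne_of_gt hax)] using h
  have h1 : ‖‖x‖⁻¹ • (x - y)‖ ≤ ‖x - y‖ := by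
    rw [norm_smul, norm_inv, norm_norm]
    have := norm_nonneg (x - y)
    nlinarith
  have h2 : ‖(‖x‖⁻¹ - ‖y‖⁻¹) • y‖ ≤ ‖x - y‖ := by
    rw [norm_smul, Real.norm_eq_abs]
    have e1 : ‖x‖⁻¹ - ‖y‖⁻¹ = (‖y‖ - ‖x‖) / (‖x‖ * ‖y‖) := by field_simp
    rw [e1, abs_div, abs_of_pos (mul_pos hax hay)]
    have e2 : |‖y‖ - ‖x‖| ≤ ‖x - y‖ := by
      rw [abs_sub_comm]; exact abs_norm_sub_norm_le x y
    have e3 : |‖y‖ - ‖x‖| / (‖x‖ * ‖y‖) * ‖y‖ = |‖y‖ - ‖x‖| / ‖x‖ := by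
      field_simp
    rw [e3]
    have e4 : |‖y‖ - ‖x‖| / ‖x‖ ≤ |‖y‖ - ‖x‖| := div_le_self (abs_nonneg _) hx
    linarith
  have := norm_add_le (‖x‖⁻¹ • (x - y)) ((‖x‖⁻¹ - ‖y‖⁻¹) • y)
  rw [← hdec] at this
  push_cast
  linarith

def capSet (p : Fin d × Bool) : Set E :=
  (fun y => y + (if p.2 then (1:ℝ) else -1) • EuclideanSpace.single p.1 (1:ℝ)) ''
    ({x : E | ⟪EuclideanSpace.single p.1 (1:ℝ), x⟫ = 0} ∩ closedBall 0 (Real.sqrt d + 1))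

lemma single_ne_zero' (i : Fin d) : EuclideanSpace.single i (1:ℝ) ≠ 0 := by
  intro h
  have := EuclideanSpace.norm_single (𝕜 := ℝ) i 1
  rw [h, norm_zero] at this
  simp at this

lemma inner_single_single (i : Fin d) :
    ⟪EuclideanSpace.single i (1:ℝ), EuclideanSpace.single i (1:ℝ)⟫ = 1 := by
  rw [real_inner_self_eq_norm_sq, EuclideanSpace.norm_single]
  norm_num

lemma capSet_norm {p : Fin d × Bool} {z : E} (hz : z ∈ capSet p) : 1 ≤ ‖z‖ := by
  obtain ⟨y, ⟨hy0, -⟩, rfl⟩ := hz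
  set s : ℝ := if p.2 then 1 else -1 with hs_def
  have hs : |s| = 1 := by by_cases h : p.2 <;> simp [hs_def, h]
  have hinner : ⟪EuclideanSpace.single p.1 (1:ℝ),
      y + s • EuclideanSpace.single p.1 (1:ℝ)⟫ = s := by
    rw [inner_add_right, hy0, real_inner_smul_right, zero_add, inner_single_single, mul_one]
  have h := abs_real_inner_le_norm (EuclideanSpace.single p.1 (1:ℝ))
    (y + s • EuclideanSpace.single p.1 (1:ℝ))
  rw [hinner, EuclideanSpace.norm_single, hs] at h
  simpa using h

lemma sphere_subset (hd : 1 ≤ d) :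
    sphere (0:E) 1 ⊆ ⋃ p : Fin d × Bool, projSph '' capSet p := by
  haveI : Nonempty (Fin d) := ⟨⟨0, hd⟩⟩
  intro x hx
  have hx1 : ‖x‖ = 1 := mem_sphere_zero_iff_norm.1 hx
  have hsum : ∑ i, x i ^ 2 = 1 := by
    have h2 : ⟪x, x⟫ = ∑ i, x i ^ 2 := by
      rw [PiLp.inner_apply]
      exact Finset.sum_congr rfl fun i _ => by
        simp [starRingEnd_apply, sq]
    rw [← h2, real_inner_self_eq_norm_sq, hx1]
    norm_num
  have hdpos : (0:ℝ) < d := by exact_mod_cast hd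
  obtain ⟨i, hi⟩ : ∃ i, 1/(d:ℝ) ≤ x i ^ 2 := by
    by_contra h
    push_neg at h
    have hlt : ∑ i, x i ^ 2 < ∑ _i : Fin d, 1/(d:ℝ) :=
      Finset.sum_lt_sum_of_nonempty univ_nonempty fun i _ => h i
    rw [Finset.sum_const, card_univ, Fintype.card_fin, nsmul_eq_mul, hsum,
      mul_one_div, div_self (ne_of_gt hdpos)] at hlt
    exact lt_irrefl 1 hlt
  set t := x i with ht_def
  have htpos : 0 < |t| := by
    rcases eq_or_ne t 0 with h | h
    · exfalso
      rw [h] at hi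
      simp at hi
      have : (0:ℝ) < 1/d := by positivity
      linarith
    · exact abs_pos.2 h
  set b : Bool := decide (0 ≤ t) with hb_def
  set s : ℝ := if b then 1 else -1 with hs_def
  have hst : s * |t| = t := by
    by_cases h : 0 ≤ t
    · simp [hs_def, hb_def, h, abs_of_nonneg h]
    · simp [hs_def, hb_def, h, abs_of_neg (lt_of_not_ge h)]
  have hsqrtpos : 0 < Real.sqrt d := Real.sqrt_pos.2 hdpos
  have h2 : (Real.sqrt d)⁻¹ ≤ |t| := by
    have := Real.sqrt_le_sqrt hi
    rwa [one_div, Real.sqrt_inv, Real.sqrt_sq_eq_abs] at this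
  have h3 : |t|⁻¹ ≤ Real.sqrt d := by
    rw [← inv_inv (Real.sqrt d)]
    gcongr
  set c : E := |t|⁻¹ • x with hc_def
  have hci : c i = s := by
    have h : c i = |t|⁻¹ * t := rfl
    rw [h]
    field_simp
    linarith [hst]
  refine Set.mem_iUnion.2 ⟨(i, b), ⟨c, ⟨c - s • EuclideanSpace.single i 1, ⟨?_, ?_⟩, ?_⟩, ?_⟩⟩
  · show ⟪EuclideanSpace.single i (1:ℝ), c - s • EuclideanSpace.single i 1⟫ = 0
    rw [EuclideanSpace.inner_single_left]
    simp [EuclideanSpace.single_apply, hci]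
  · show c - s • EuclideanSpace.single i 1 ∈ closedBall (0:E) (Real.sqrt d + 1)
    rw [mem_closedBall, dist_zero_right]
    have hnc : ‖c‖ = |t|⁻¹ := by
      rw [hc_def, norm_smul, Real.norm_eq_abs, abs_inv, abs_abs, hx1, mul_one]
    have hns : ‖s • EuclideanSpace.single i (1:ℝ)‖ = 1 := by
      rw [norm_smul, EuclideanSpace.norm_single, Real.norm_eq_abs, norm_one, mul_one]
      by_cases h : b <;> simp [hs_def, h]
    calc ‖c - s • EuclideanSpace.single i 1‖ ≤ ‖c‖ + ‖s • EuclideanSpace.single i (1:ℝ)‖ :=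
          norm_sub_le _ _
      _ ≤ Real.sqrt d + 1 := by rw [hnc, hns]; linarith
  · show (c - s • EuclideanSpace.single i 1) + s • EuclideanSpace.single i 1 = c
    abel
  · show projSph c = x
    have hnc : ‖c‖ = |t|⁻¹ := by
      rw [hc_def, norm_smul, Real.norm_eq_abs, abs_inv, abs_abs, hx1, mul_one]
    rw [projSph, hnc, inv_inv, hc_def, smul_smul, mul_inv_cancel₀ (ne_of_gt htpos), one_smul]

lemma sphere_fin (hd : 1 ≤ d) : sphMeasure d (sphere (0:E) 1) < ⊤ := by
  haveI : Nonempty (Fin d) := ⟨⟨0, hd⟩⟩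
  refine lt_of_le_of_lt (measure_mono (sphere_subset hd)) ?_
  refine lt_of_le_of_lt (measure_iUnion_le _) ?_
  rw [tsum_fintype]
  refine ENNReal.sum_lt_top.2 fun p _ => ?_
  have hLip := (lipschitz_projSph.mono
    (fun z hz => capSet_norm hz)).hausdorffMeasure_image_le (hd0 hd) (s := capSet p)
  refine lt_of_le_of_lt hLip (ENNReal.mul_lt_top ?_ ?_)
  · exact ENNReal.rpow_lt_top_of_nonneg (hd0 hd) (by norm_num)
  · have htr : Isometry (fun y : E =>
        y + (if p.2 then (1:ℝ) else -1) • EuclideanSpace.single p.1 1) :=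
      Isometry.of_dist_eq fun a b => dist_add_right a b _
    rw [capSet]
    refine lt_of_le_of_lt (le_of_eq (htr.hausdorffMeasure_image (Or.inl (hd0 hd)) _)) ?_
    exact fin_hyp hd (single_ne_zero' p.1) _



lemma integrableOn_cont {F : Type*} [NormedAddCommGroup F] [NormedSpace ℝ F]
    (hd : 1 ≤ d) {f : E → F} (hf : Continuous f) {T : Set E}
    (hT : T ⊆ sphere (0:E) 1) (hTm : MeasurableSet T) :
    IntegrableOn f T (sphMeasure d) := by
  obtain ⟨C, hC⟩ := (isCompact_sphere (0:E) 1).exists_bound_of_continuousOn hf.continuousOn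
  apply Measure.integrableOn_of_bounded (M := C)
  · exact ((measure_mono hT).trans_lt (sphere_fin hd)).ne
  · exact hf.aestronglyMeasurable
  · exact ae_restrict_of_forall_mem hTm fun x hx => hC x (hT hx)

lemma hne : (Finset.univ : Finset (Fin (d+1))).Nonempty := univ_nonempty

lemma inner_le_sup (v : Fin (d + 1) → E) (x : E) {y : E} (hy : y ∈ convexHull ℝ (Set.range v)) :
    ⟪x, y⟫ ≤ Finset.univ.sup' hne fun i => ⟪x, v i⟫ := by
  have hlin : IsLinearMap ℝ fun z : E => ⟪x, z⟫ :=
    ⟨fun a b => inner_add_right x a b, fun c z => real_inner_smul_right x z c⟩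
  have hconv : Convex ℝ {z : E | ⟪x, z⟫ ≤ Finset.univ.sup' hne fun i => ⟪x, v i⟫} :=
    convex_halfSpace_le hlin _
  refine convexHull_min ?_ hconv hy
  rintro z ⟨i, rfl⟩
  exact Finset.le_sup' (fun i => ⟪x, v i⟫) (Finset.mem_univ i)

lemma suppFn_hull_eq (v : Fin (d + 1) → E) (x : E) :
    suppFn (convexHull ℝ (Set.range v)) x = Finset.univ.sup' hne fun i => ⟪x, v i⟫ := by
  refine le_antisymm ?_ ?_
  · apply csSup_le
    · exact Set.Nonempty.image _ ⟨v 0, subset_convexHull ℝ _ ⟨0, rfl⟩⟩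
    · rintro a ⟨y, hy, rfl⟩
      exact inner_le_sup v x hy
  · obtain ⟨i, -, hi⟩ := Finset.exists_mem_eq_sup' hne fun i => ⟪x, v i⟫
    rw [hi]
    apply le_csSup
    · refine ⟨Finset.univ.sup' hne fun i => ⟪x, v i⟫, ?_⟩
      rintro a ⟨y, hy, rfl⟩
      exact inner_le_sup v x hy
    · exact ⟨v i, subset_convexHull ℝ _ ⟨i, rfl⟩, rfl⟩

lemma continuous_suppFn_hull (v : Fin (d + 1) → E) : Continuous (suppFn (convexHull ℝ (Set.range v))) := by
  have heq : suppFn (convexHull ℝ (Set.range v))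
      = fun x => Finset.univ.sup' hne fun i => ⟪x, v i⟫ :=
    funext (suppFn_hull_eq v)
  rw [heq]
  exact Continuous.finset_sup'_apply hne fun i _ => continuous_id.inner continuous_const

end Stmt18Aux

theorem stmt18 (d : ℕ) (hd : 3 ≤ d) (v : Fin (d + 1) → EuclideanSpace ℝ (Fin d))
    (hvind : AffineIndependent ℝ v)
    (hvs : ∀ i, v i ∈ Metric.sphere (0 : EuclideanSpace ℝ (Fin d)) 1)
    (hG0 : ∀ i, (∫ x in vorCell v i, x ∂(sphMeasure d)) ≠ 0)
    (hGind : AffineIndependent ℝ (fun i => sphCentroid d (vorCell v i))) :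
    meanWidth (convexHull ℝ (Set.range v)) ≤
      meanWidth (convexHull ℝ (Set.range (fun i => sphCentroid d (vorCell v i)))) := by
  classical
  have hd1 : 1 ≤ d := by omega
  set G : Fin (d + 1) → EuclideanSpace ℝ (Fin d) := fun i => sphCentroid d (vorCell v i)
    with hGdef
  set m : Fin (d + 1) → EuclideanSpace ℝ (Fin d) :=
    fun i => ∫ x in vorCell v i, x ∂(sphMeasure d) with hmdef
  have hVS : ∀ i, vorCell v i ⊆ Metric.sphere (0 : EuclideanSpace ℝ (Fin d)) 1 :=
    fun i x hx => hx.1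
  have hVcl : ∀ i, IsClosed (vorCell v i) := by
    intro i
    have heq : vorCell v i = Metric.sphere (0 : EuclideanSpace ℝ (Fin d)) 1
        ∩ ⋂ j, {x | ⟪x, v j⟫ ≤ ⟪x, v i⟫} := by
      ext x
      simp [vorCell, Set.mem_iInter]
    rw [heq]
    exact Metric.isClosed_sphere.inter (isClosed_iInter fun j =>
      isClosed_le (continuous_id.inner continuous_const) (continuous_id.inner continuous_const))
  have hVm : ∀ i, MeasurableSet (vorCell v i) := fun i => (hVcl i).measurableSet
  set T : Fin (d + 1) → Set (EuclideanSpace ℝ (Fin d)) :=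
    fun i => vorCell v i \ ⋃ j, ⋃ (_ : j < i), vorCell v j with hTdef
  have hTsub : ∀ i, T i ⊆ vorCell v i := fun i => Set.diff_subset
  have hTm : ∀ i, MeasurableSet (T i) :=
    fun i => (hVm i).diff (MeasurableSet.iUnion fun j => MeasurableSet.iUnion fun _ => hVm j)
  have hTS : ∀ i, T i ⊆ Metric.sphere (0 : EuclideanSpace ℝ (Fin d)) 1 :=
    fun i => (hTsub i).trans (hVS i)
  have hkey : ∀ i j, i < j → Disjoint (T i) (T j) := by
    intro i j h
    refine Set.disjoint_left.2 fun x hxi hxj => ?_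
    exact hxj.2 (Set.mem_iUnion.2 ⟨i, Set.mem_iUnion.2 ⟨h, hxi.1⟩⟩)
  have hdisj : Set.Pairwise ↑(Finset.univ : Finset (Fin (d + 1))) (Function.onFun Disjoint T) := by
    intro i _ j _ hij
    rcases hij.lt_or_gt with h | h
    · exact hkey i j h
    · exact (hkey j i h).symm
  have hU : (⋃ i ∈ (Finset.univ : Finset (Fin (d + 1))), T i)
      = Metric.sphere (0 : EuclideanSpace ℝ (Fin d)) 1 := by
    apply Set.Subset.antisymm
    · exact Set.iUnion₂_subset fun i _ => hTS i
    · intro x hx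
      obtain ⟨i₀, -, hi₀⟩ := Finset.exists_mem_eq_sup' Stmt18Aux.hne fun i => ⟪x, v i⟫
      have hx0 : x ∈ vorCell v i₀ :=
        ⟨hx, fun j => le_of_le_of_eq (Finset.le_sup' (fun i => ⟪x, v i⟫) (Finset.mem_univ j)) hi₀⟩
      have hσne : (Finset.univ.filter (fun i => x ∈ vorCell v i)).Nonempty :=
        ⟨i₀, Finset.mem_filter.2 ⟨Finset.mem_univ _, hx0⟩⟩
      set i₁ := (Finset.univ.filter (fun i => x ∈ vorCell v i)).min' hσne with hi₁
      have hmem : x ∈ vorCell v i₁ :=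
        (Finset.mem_filter.1 ((Finset.univ.filter (fun i => x ∈ vorCell v i)).min'_mem hσne)).2
      refine Set.mem_biUnion (Finset.mem_univ i₁) ⟨hmem, ?_⟩
      intro hcon
      obtain ⟨j, hj⟩ := Set.mem_iUnion.1 hcon
      obtain ⟨hjlt, hjmem⟩ := Set.mem_iUnion.1 hj
      exact absurd ((Finset.univ.filter (fun i => x ∈ vorCell v i)).min'_le j
        (Finset.mem_filter.2 ⟨Finset.mem_univ _, hjmem⟩)) (not_le.2 hjlt)
  have hnull : ∀ i, sphMeasure d (vorCell v i \ T i) = 0 := by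
    intro i
    have hsub : vorCell v i \ T i ⊆ ⋃ j, ⋃ (_ : j < i), vorCell v i ∩ vorCell v j := by
      intro x hx
      have hx1 : x ∈ vorCell v i := hx.1
      have hx2 : x ∈ ⋃ j, ⋃ (_ : j < i), vorCell v j := by
        by_contra h
        exact hx.2 ⟨hx1, h⟩
      obtain ⟨j, hj⟩ := Set.mem_iUnion.1 hx2
      obtain ⟨hlt, hmem⟩ := Set.mem_iUnion.1 hj
      exact Set.mem_iUnion.2 ⟨j, Set.mem_iUnion.2 ⟨hlt, hx1, hmem⟩⟩
    refine measure_mono_null hsub ?_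
    refine measure_iUnion_null fun j => measure_iUnion_null fun hlt => ?_
    have hne' : v i - v j ≠ 0 := sub_ne_zero.2 (hvind.injective.ne (ne_of_gt hlt))
    refine measure_mono_null ?_ (Stmt18Aux.null_cap hd1 hne')
    rintro x ⟨hxi, hxj⟩
    refine ⟨hxi.1, ?_⟩
    have h1 := hxi.2 j
    have h2 := hxj.2 i
    rw [inner_sub_left, real_inner_comm x (v i), real_inner_comm x (v j)]
    linarith
  have hae : ∀ i, T i =ᵐ[sphMeasure d] vorCell v i := by
    intro i
    rw [MeasureTheory.ae_eq_set]
    constructor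
    · rw [Set.diff_eq_empty.2 (hTsub i)]
      exact measure_empty
    · exact hnull i
  have hIid : ∀ i, IntegrableOn (fun x => x) (vorCell v i) (sphMeasure d) :=
    fun i => Stmt18Aux.integrableOn_cont hd1 continuous_id (hVS i) (hVm i)
  have hint : ∀ (c : EuclideanSpace ℝ (Fin d)) i,
      ∫ x in vorCell v i, ⟪x, c⟫ ∂(sphMeasure d) = ⟪m i, c⟫ := by
    intro c i
    have h1 : ∫ x in vorCell v i, ⟪c, x⟫ ∂(sphMeasure d) = ⟪c, m i⟫ :=
      integral_inner (hIid i) c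
    calc ∫ x in vorCell v i, ⟪x, c⟫ ∂(sphMeasure d)
        = ∫ x in vorCell v i, ⟪c, x⟫ ∂(sphMeasure d) :=
          integral_congr_ae (Filter.Eventually.of_forall fun x => real_inner_comm c x)
      _ = ⟪c, m i⟫ := h1
      _ = ⟪m i, c⟫ := real_inner_comm _ _
  have hm0 : ∀ i, m i ≠ 0 := hG0
  have hmG : ∀ i, ⟪m i, G i⟫ = ‖m i‖ := by
    intro i
    have : G i = ‖m i‖⁻¹ • m i := rfl
    rw [this, real_inner_smul_right, real_inner_self_eq_norm_sq, sq, ← mul_assoc,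
      inv_mul_cancel₀ (norm_ne_zero_iff.2 (hm0 i)), one_mul]
  have hviG : ∀ i, ⟪m i, v i⟫ ≤ ⟪m i, G i⟫ := by
    intro i
    rw [hmG i]
    have h := real_inner_le_norm (m i) (v i)
    rwa [mem_sphere_zero_iff_norm.1 (hvs i), mul_one] at h
  have hmain : ∀ i, ∫ x in T i, suppFn (convexHull ℝ (Set.range v)) x ∂(sphMeasure d)
      ≤ ∫ x in T i, suppFn (convexHull ℝ (Set.range G)) x ∂(sphMeasure d) := by
    intro i
    have e1 : ∫ x in T i, suppFn (convexHull ℝ (Set.range v)) x ∂(sphMeasure d)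
        = ∫ x in T i, ⟪x, v i⟫ ∂(sphMeasure d) := by
      refine setIntegral_congr_fun (hTm i) fun x hx => ?_
      rw [Stmt18Aux.suppFn_hull_eq]
      exact le_antisymm (Finset.sup'_le _ _ fun j _ => (hTsub i hx).2 j)
        (Finset.le_sup' (fun j => ⟪x, v j⟫) (Finset.mem_univ i))
    have e2 : ∫ x in T i, ⟪x, v i⟫ ∂(sphMeasure d) = ⟪m i, v i⟫ := by
      rw [setIntegral_congr_set (hae i), hint (v i) i]
    have e3 : ⟪m i, G i⟫ = ∫ x in T i, ⟪x, G i⟫ ∂(sphMeasure d) := by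
      rw [setIntegral_congr_set (hae i), hint (G i) i]
    have e4 : ∫ x in T i, ⟪x, G i⟫ ∂(sphMeasure d)
        ≤ ∫ x in T i, suppFn (convexHull ℝ (Set.range G)) x ∂(sphMeasure d) := by
      refine setIntegral_mono_on
        (Stmt18Aux.integrableOn_cont hd1 (continuous_id.inner continuous_const)
          (hTS i) (hTm i))
        (Stmt18Aux.integrableOn_cont hd1 (Stmt18Aux.continuous_suppFn_hull G)
          (hTS i) (hTm i))
        (hTm i) fun x hx => ?_
      rw [Stmt18Aux.suppFn_hull_eq]
      exact Finset.le_sup' (fun j => ⟪x, G j⟫) (Finset.mem_univ i)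
    rw [e1, e2]
    calc ⟪m i, v i⟫ ≤ ⟪m i, G i⟫ := hviG i
      _ = _ := e3
      _ ≤ _ := e4
  have hbi : ∀ (w : Fin (d + 1) → EuclideanSpace ℝ (Fin d)),
      ∫ x in Metric.sphere (0 : EuclideanSpace ℝ (Fin d)) 1,
        suppFn (convexHull ℝ (Set.range w)) x ∂(sphMeasure d)
      = ∑ i, ∫ x in T i, suppFn (convexHull ℝ (Set.range w)) x ∂(sphMeasure d) := by
    intro w
    rw [← hU]
    exact integral_biUnion_finset Finset.univ (fun i _ => hTm i) hdisj
      (fun i _ => Stmt18Aux.integrableOn_cont hd1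
        (Stmt18Aux.continuous_suppFn_hull w) (hTS i) (hTm i))
  have hfin : ∫ x in Metric.sphere (0 : EuclideanSpace ℝ (Fin d)) 1,
      suppFn (convexHull ℝ (Set.range v)) x ∂(sphMeasure d)
      ≤ ∫ x in Metric.sphere (0 : EuclideanSpace ℝ (Fin d)) 1,
        suppFn (convexHull ℝ (Set.range G)) x ∂(sphMeasure d) := by
    rw [hbi v, hbi G]
    exact Finset.sum_le_sum fun i _ => hmain i
  unfold meanWidth
  linarith
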